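/- Let e₁, e₂ be natural numbers with e₁ ≥ 3 and e₂ ≥ 3, and let H be an additive subgroup of (ℤ/e₁ℤ) × (ℤ/e₂ℤ) such that the projection onto the first factor maps H onto ℤ/e₁ℤ, the projection onto the second factor maps H onto ℤ/e₂ℤ, and for every x = (x₁,x₂) ∈ H the rational number val x₁ / e₁ + val x₂ / e₂ is an integer. Then e₁ = e₂. -/

import Mathlib

lemma case_three_aux (e₁ e₂ : ℕ) (he₁ : 3 ≤ e₁) (he₂ : 3 ≤ e₂) (v : ℕ) (hv : v < e₂)
    (z : ℤ) (h : (1 : ℚ) / e₁ + (v : ℚ) / e₂ = (z : ℚ)) : e₁ ∣ e₂ := by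
  have h1 : (0:ℚ) < (e₁:ℚ) := by exact_mod_cast (by omega : 0 < e₁)
  have h2 : (0:ℚ) < (e₂:ℚ) := by exact_mod_cast (by omega : 0 < e₂)
  have hv' : (v:ℚ) < e₂ := by exact_mod_cast hv
  have hz1 : z = 1 := by
    have hlt : (z:ℚ) < 2 := by
      rw [← h]
      have : (1:ℚ)/e₁ < 1 := by
        rw [div_lt_one h1]; exact_mod_cast (by omega : 1 < e₁)
      have h4 : (v:ℚ)/e₂ < 1 := by rw [div_lt_one h2]; exact hv'
      linarith
    have hgt : (0:ℚ) < (z:ℚ) := by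
      rw [← h]; positivity
    have : (0:ℤ) < z := by exact_mod_cast hgt
    have : (z:ℤ) < 2 := by exact_mod_cast hlt
    omega
  subst hz1
  -- clear denominators: e₂ + v*e₁ = e₁*e₂
  have key : (e₂ : ℚ) + v * e₁ = e₁ * e₂ := by
    field_simp at h
    push_cast at h
    linarith [h]
  have keyn : e₂ + v * e₁ = e₁ * e₂ := by exact_mod_cast key
  exact ⟨e₂ - v, by rw [Nat.mul_sub, Nat.mul_comm e₁ v]; omega⟩

theorem case_three_equal_indices (e₁ e₂ : ℕ) (he₁ : 3 ≤ e₁) (he₂ : 3 ≤ e₂)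
    (H : AddSubgroup (ZMod e₁ × ZMod e₂))
    (hsurj₁ : ∀ a : ZMod e₁, ∃ x ∈ H, x.1 = a)
    (hsurj₂ : ∀ b : ZMod e₂, ∃ x ∈ H, x.2 = b)
    (hint : ∀ x ∈ H, ∃ z : ℤ,
      ((x.1.val : ℚ) / e₁ + (x.2.val : ℚ) / e₂ = (z : ℚ))) :
    e₁ = e₂ := by
  haveI : Fact (1 < e₁) := ⟨by omega⟩
  haveI : Fact (1 < e₂) := ⟨by omega⟩
  have hd₁ : e₁ ∣ e₂ := by
    obtain ⟨x, hx, hx1⟩ := hsurj₁ 1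
    obtain ⟨z, hz⟩ := hint x hx
    rw [hx1, ZMod.val_one] at hz
    push_cast at hz
    exact case_three_aux e₁ e₂ he₁ he₂ x.2.val (ZMod.val_lt x.2) z hz
  have hd₂ : e₂ ∣ e₁ := by
    obtain ⟨x, hx, hx2⟩ := hsurj₂ 1
    obtain ⟨z, hz⟩ := hint x hx
    rw [hx2, ZMod.val_one] at hz
    push_cast at hz
    exact case_three_aux e₂ e₁ he₂ he₁ x.1.val (ZMod.val_lt x.1) z (by linarith [hz])
  exact Nat.dvd_antisymm hd₁ hd₂
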